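/- Bounded staging set rule (SP_b): Let f be locally Lipschitz (e.g., polynomial), S ⊆ ℝⁿ bounded, p polynomial, ε > 0. Assume (i) as long as the solution has not entered P it remains in S, and (ii) ∇p(y)·f(y) ≥ ε for all y ∈ S. Then the solution satisfies φ(τ) ∈ P for some τ ∈ [0,T) where [0,T) is the maximal existence interval. -/

import Mathlib

open MvPolynomial
open scoped ENNReal

lemma mv_eval_hasDerivAt {n : ℕ} (p : MvPolynomial (Fin n) ℝ) {φ : ℝ → Fin n → ℝ}
    {φ' : Fin n → ℝ} {t : ℝ} (hφ : HasDerivAt φ φ' t) :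
    HasDerivAt (fun s => eval (φ s) p) (∑ i, eval (φ t) (pderiv i p) * φ' i) t := by
  induction p using MvPolynomial.induction_on with
  | C a => simpa [pderiv_C] using hasDerivAt_const t (a : ℝ)
  | add p q hp hq => simpa [add_mul, Finset.sum_add_distrib] using hp.fun_add hq
  | mul_X p i hp =>
      have hi : HasDerivAt (fun s => φ s i) (φ' i) t := hasDerivAt_pi.mp hφ i
      have h := hp.fun_mul hi
      have : (∑ j, eval (φ t) (pderiv j (p * X i)) * φ' j)
          = (∑ j, eval (φ t) (pderiv j p) * φ' j) * φ t i + eval (φ t) p * φ' i := by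
        classical
        simp only [pderiv_mul, pderiv_X, eval_add, eval_mul, eval_X, add_mul,
          Finset.sum_add_distrib, Finset.sum_mul]
        congr 1
        · apply Finset.sum_congr rfl; intro j _; ring
        · rw [Finset.sum_eq_single i]
          · simp
          · intro j _ hji
            simp [Pi.single_apply, hji]
          · simp
      rw [this]
      simpa [eval_mul, eval_X] using h

lemma growth_aux {g d : ℝ → ℝ} {ε t : ℝ} (ht : 0 ≤ t)
    (hg : ∀ s, 0 ≤ s → s ≤ t → HasDerivAt g (d s) s)
    (hd : ∀ s, 0 ≤ s → s ≤ t → ε ≤ d s) : g 0 + ε * t ≤ g t := by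
  set h : ℝ → ℝ := fun s => g s - ε * s with hh
  have hder : ∀ s, 0 ≤ s → s ≤ t → HasDerivAt h (d s - ε) s := by
    intro s h1 h2
    have hc : HasDerivAt (fun y : ℝ => ε * y) ε s := by
      simpa using (hasDerivAt_id s).const_mul ε
    exact (hg s h1 h2).sub hc
  have hmono : MonotoneOn h (Set.Icc 0 t) := by
    apply monotoneOn_of_deriv_nonneg (convex_Icc 0 t)
    · exact fun s hs => ((hder s hs.1 hs.2).continuousAt).continuousWithinAt
    · intro s hs
      rw [interior_Icc] at hs
      exact ((hder s hs.1.le hs.2.le).differentiableAt).differentiableWithinAt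
    · intro s hs
      rw [interior_Icc] at hs
      rw [(hder s hs.1.le hs.2.le).deriv]
      have := hd s hs.1.le hs.2.le
      linarith
  have h2 := hmono (Set.left_mem_Icc.mpr ht) (Set.right_mem_Icc.mpr ht) ht
  simp only [hh] at h2
  linarith

/-- Bounded staging set rule SP_b: for a locally Lipschitz ODE with right-maximal
solution `φ` on `[0,T)`, if the solution stays in the bounded set `S` as long as
it has not entered `P`, and the Lie derivative of the polynomial `p` is at least
`ε > 0` on `S`, then the solution enters `P` within its existence interval. -/
theorem staging_set_bounded (n : ℕ) (f : (Fin n → ℝ) → (Fin n → ℝ))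
    (hf : LocallyLipschitz f)
    (T : ℝ≥0∞) (hT : 0 < T) (φ : ℝ → (Fin n → ℝ))
    (hsol : ∀ t : ℝ, 0 ≤ t → ENNReal.ofReal t < T → HasDerivAt φ (f (φ t)) t)
    (hmax : ∀ (T' : ℝ) (ψ : ℝ → (Fin n → ℝ)), ψ 0 = φ 0 →
      (∀ t ∈ Set.Ico (0:ℝ) T', HasDerivAt ψ (f (ψ t)) t) → ENNReal.ofReal T' ≤ T)
    (S P : Set (Fin n → ℝ)) (hSb : Bornology.IsBounded S)
    (p : MvPolynomial (Fin n) ℝ) (ε : ℝ) (hε : 0 < ε)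
    (hstage : ∀ t : ℝ, 0 ≤ t → ENNReal.ofReal t < T →
      (∀ s ∈ Set.Icc (0:ℝ) t, φ s ∉ P) → φ t ∈ S)
    (hlie : ∀ y ∈ S, ε ≤ ∑ i : Fin n, eval y (pderiv i p) * f y i) :
    ∃ τ : ℝ, 0 ≤ τ ∧ ENNReal.ofReal τ < T ∧ φ τ ∈ P := by
  classical
  by_contra hcon
  push_neg at hcon
  have hS : ∀ t, 0 ≤ t → ENNReal.ofReal t < T → φ t ∈ S := fun t ht hlt =>
    hstage t ht hlt fun s hs => hcon s hs.1
      (lt_of_le_of_lt (ENNReal.ofReal_le_ofReal hs.2) hlt)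
  have hfc : Continuous f := hf.continuous
  have hKc : IsCompact (closure S) := hSb.isCompact_closure
  have h0S : φ 0 ∈ S := hS 0 le_rfl (by simpa using hT)
  obtain ⟨M, hM'⟩ := hKc.exists_bound_of_continuousOn (p.continuous_eval).continuousOn
  have hM : ∀ y ∈ closure S, eval y p ≤ M := fun y hy =>
    (le_abs_self _).trans (by simpa [Real.norm_eq_abs] using hM' y hy)
  -- derivative of p along φ
  have gderiv : ∀ t : ℝ, 0 ≤ t → ENNReal.ofReal t < T →
      HasDerivAt (fun s => eval (φ s) p)
        (∑ i, eval (φ t) (pderiv i p) * f (φ t) i) t :=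
    fun t h1 h2 => mv_eval_hasDerivAt p (hsol t h1 h2)
  -- T is finite
  have hTne : T ≠ ⊤ := by
    intro htop
    have hdom : ∀ t : ℝ, ENNReal.ofReal t < T := fun t => htop ▸ ENNReal.ofReal_lt_top
    have key : ∀ t : ℝ, 0 ≤ t → eval (φ 0) p + ε * t ≤ M := by
      intro t ht
      have hgrow : eval (φ 0) p + ε * t ≤ eval (φ t) p := by
        refine growth_aux ht (fun s h1 _ => gderiv s h1 (hdom s)) (fun s h1 _ => ?_)
        exact hlie _ (hS s h1 (hdom s))
      exact hgrow.trans (hM _ (subset_closure (hS t ht (hdom t))))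
    have h1 := key (|M - eval (φ 0) p| / ε + 1) (by positivity)
    have h2 : ε * (|M - eval (φ 0) p| / ε + 1) = |M - eval (φ 0) p| + ε := by
      field_simp
    rw [h2] at h1
    have h3 := le_abs_self (M - eval (φ 0) p)
    linarith
  set Tr := T.toReal with hTrdef
  have hTrpos : 0 < Tr := ENNReal.toReal_pos hT.ne' hTne
  have hdom : ∀ t : ℝ, 0 ≤ t → t < Tr → ENNReal.ofReal t < T := fun t h1 h2 =>
    (ENNReal.ofReal_lt_iff_lt_toReal h1 hTne).mpr h2
  have hSIco : ∀ t ∈ Set.Ico (0:ℝ) Tr, φ t ∈ S := fun t ht => hS t ht.1 (hdom t ht.1 ht.2)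
  -- bound on ‖f‖ on closure S
  obtain ⟨C₀, hC₀⟩ := hKc.exists_bound_of_continuousOn hfc.continuousOn
  have hC₀0 : 0 ≤ C₀ := (norm_nonneg _).trans (hC₀ _ (subset_closure h0S))
  -- φ is Lipschitz on [0, Tr)
  have hφlip : LipschitzOnWith C₀.toNNReal φ (Set.Ico 0 Tr) := by
    apply Convex.lipschitzOnWith_of_nnnorm_deriv_le
      (fun x hx => (hsol x hx.1 (hdom x hx.1 hx.2)).differentiableAt)
      ?_ (convex_Ico 0 Tr)
    intro x hx
    rw [(hsol x hx.1 (hdom x hx.1 hx.2)).deriv]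
    rw [Real.le_toNNReal_iff_coe_le hC₀0]
    simpa using hC₀ _ (subset_closure (hSIco x hx))
  obtain ⟨g, hglip, hgeq⟩ := hφlip.extend_pi
  set xT := g Tr with hxT
  have htend : Filter.Tendsto φ (nhdsWithin Tr (Set.Iio Tr)) (nhds xT) := by
    have h1 : Filter.Tendsto g (nhdsWithin Tr (Set.Iio Tr)) (nhds xT) :=
      (hglip.continuous.tendsto Tr).mono_left nhdsWithin_le_nhds
    apply h1.congr'
    filter_upwards [Ioo_mem_nhdsLT_of_mem (Set.mem_Ioc.mpr ⟨hTrpos, le_rfl⟩)] with s hs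
    exact (hgeq ⟨hs.1.le, hs.2⟩).symm
  -- local Lipschitz data at xT
  obtain ⟨L, U, hU, hLip⟩ := hf xT
  obtain ⟨r0, hr0, hball⟩ := Metric.mem_nhds_iff.mp hU
  set r : ℝ := r0 / 2 with hrdef
  have hrpos : 0 < r := half_pos hr0
  have hcb : Metric.closedBall xT r ⊆ U := fun y hy =>
    hball (lt_of_le_of_lt hy (half_lt_self hr0))
  have hxTU : xT ∈ U := hcb (Metric.mem_closedBall_self hrpos.le)
  set Cb : ℝ := ‖f xT‖ + (L : ℝ) * r + 1 with hCbdef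
  have hCbpos : 0 < Cb := by positivity
  set δ : ℝ := (r / 2) / Cb with hδdef
  have hδpos : 0 < δ := by positivity
  -- choose t₀ close to Tr
  have hev : ∀ᶠ s in nhdsWithin Tr (Set.Iio Tr), φ s ∈ Metric.ball xT (r / 2) :=
    htend (Metric.ball_mem_nhds xT (by positivity))
  obtain ⟨a, ha, hIoo⟩ := mem_nhdsLT_iff_exists_Ioo_subset.mp hev
  have ha' : a < Tr := ha
  set t₀ : ℝ := max (max ((a + Tr) / 2) (Tr - δ / 4)) (Tr / 2) with ht₀def
  have ht₀lt : t₀ < Tr := by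
    apply max_lt (max_lt (by linarith) (by linarith)) (by linarith)
  have hat₀ : a < t₀ :=
    lt_of_lt_of_le (by linarith) ((le_max_left _ _).trans (le_max_left _ _))
  have ht₀pos : 0 < t₀ := lt_of_lt_of_le (by linarith) (le_max_right _ _)
  have ht₀δ : Tr - δ / 4 ≤ t₀ := (le_max_right _ _).trans (le_max_left _ _)
  have hx₀ball : φ t₀ ∈ Metric.ball xT (r / 2) := hIoo ⟨hat₀, ht₀lt⟩
  have hx₀dist : dist (φ t₀) xT < r / 2 := by simpa [Metric.mem_ball] using hx₀ball
  -- Picard-Lindelöf from (t₀, φ t₀)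
  have hsub : Metric.closedBall (φ t₀) (r / 2) ⊆ U := by
    intro y hy
    apply hcb
    rw [Metric.mem_closedBall] at hy ⊢
    calc dist y xT ≤ dist y (φ t₀) + dist (φ t₀) xT := dist_triangle _ _ _
      _ ≤ r := by linarith
  have hr2 : (((r / 2).toNNReal : NNReal) : ℝ) = r / 2 := Real.coe_toNNReal _ (by positivity)
  have hpl : IsPicardLindelof (fun _ y => f y) (tmin := t₀) (tmax := t₀ + δ)
      ⟨t₀, ⟨le_rfl, by linarith⟩⟩ (φ t₀) (r / 2).toNNReal 0 Cb.toNNReal L := by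
    refine ⟨fun t _ => by rw [hr2]; exact hLip.mono hsub,
      fun x _ => continuousOn_const, fun t _ x hx => ?_, ?_⟩
    · rw [hr2] at hx
      rw [Real.coe_toNNReal _ hCbpos.le]
      have hxU : x ∈ U := hsub hx
      have hd : dist (f x) (f xT) ≤ (L : ℝ) * dist x xT := hLip.dist_le_mul x hxU xT hxTU
      have hdx : dist x xT ≤ r := by
        rw [Metric.mem_closedBall] at hx
        calc dist x xT ≤ dist x (φ t₀) + dist (φ t₀) xT := dist_triangle _ _ _
          _ ≤ r := by linarith
      have h1 : ‖f x‖ - ‖f xT‖ ≤ ‖f x - f xT‖ := norm_sub_norm_le _ _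
      rw [← dist_eq_norm] at h1
      have h2 : (L : ℝ) * dist x xT ≤ (L : ℝ) * r :=
        mul_le_mul_of_nonneg_left hdx L.coe_nonneg
      rw [hCbdef]
      linarith
    · show (Cb.toNNReal : ℝ) * max (t₀ + δ - t₀) (t₀ - t₀) ≤ ((r / 2).toNNReal : ℝ) - ((0 : NNReal) : ℝ)
      rw [Real.coe_toNNReal _ hCbpos.le, hr2, NNReal.coe_zero, sub_zero]
      have h0 : max (t₀ + δ - t₀) (t₀ - t₀) = δ := by
        rw [add_sub_cancel_left, sub_self, max_eq_left hδpos.le]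
      have h1 : Cb * δ = r / 2 := by
        rw [hδdef, mul_comm]
        exact div_mul_cancel₀ _ hCbpos.ne'
      rw [h0, h1]
  obtain ⟨ψ, hψ0, hψd⟩ := hpl.exists_eq_forall_mem_Icc_hasDerivWithinAt₀
  replace hψ0 : ψ t₀ = φ t₀ := hψ0
  -- glue φ and ψ
  set T' : ℝ := Tr + δ / 2 with hT'def
  have hT'lt : T' < t₀ + δ := by
    rw [hT'def]; linarith
  set χ : ℝ → (Fin n → ℝ) := fun s => if s ≤ t₀ then φ s else ψ s with hχdef
  have hχ0 : χ 0 = φ 0 := if_pos ht₀pos.le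
  have hχd : ∀ t ∈ Set.Ico (0:ℝ) T', HasDerivAt χ (f (χ t)) t := by
    intro t ht
    rcases lt_trichotomy t t₀ with hlt | heq | hgt
    · have hevφ : χ =ᶠ[nhds t] φ := by
        filter_upwards [Iio_mem_nhds hlt] with s hs
        exact if_pos (le_of_lt hs)
      have hφt := hsol t ht.1 (hdom t ht.1 (hlt.trans ht₀lt))
      have hχt : χ t = φ t := if_pos hlt.le
      rw [hχt]
      exact hφt.congr_of_eventuallyEq hevφ
    · rw [heq]
      have hφt := hsol t₀ ht₀pos.le (hdom t₀ ht₀pos.le ht₀lt)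
      have hχt : χ t₀ = φ t₀ := if_pos le_rfl
      have hL : HasDerivWithinAt χ (f (φ t₀)) (Set.Iic t₀) t₀ :=
        hφt.hasDerivWithinAt.congr (fun s hs => if_pos hs) hχt
      have hR : HasDerivWithinAt χ (f (φ t₀)) (Set.Ici t₀) t₀ := by
        have h1' := hψd t₀ ⟨le_rfl, by linarith⟩
        have h2' : HasDerivWithinAt ψ (f (ψ t₀)) (Set.Ici t₀) t₀ :=
          h1'.mono_of_mem_nhdsWithin (Icc_mem_nhdsGE_of_mem ⟨le_rfl, by linarith⟩)
        rw [hψ0] at h2'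
        refine h2'.congr (fun s hs => ?_) (hχt.trans hψ0.symm)
        by_cases h : s ≤ t₀
        · have hst : s = t₀ := le_antisymm h hs
          rw [hst]
          exact hχt.trans hψ0.symm
        · exact if_neg h
      have hu := hL.union hR
      rw [Set.Iic_union_Ici] at hu
      rw [hχt]
      exact hasDerivWithinAt_univ.mp hu
    · have hevψ : χ =ᶠ[nhds t] ψ := by
        filter_upwards [Ioi_mem_nhds hgt] with s hs
        exact if_neg (not_le.mpr hs)
      have htlt : t < t₀ + δ := lt_trans ht.2 hT'lt
      have h1' := (hψd t ⟨hgt.le, htlt.le⟩).hasDerivAt (Icc_mem_nhds hgt htlt)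
      have hχt : χ t = ψ t := if_neg (not_le.mpr hgt)
      rw [hχt]
      exact h1'.congr_of_eventuallyEq hevψ
  have hbig := hmax T' χ hχ0 hχd
  rw [show T = ENNReal.ofReal Tr from (ENNReal.ofReal_toReal hTne).symm] at hbig
  have hle : T' ≤ Tr := (ENNReal.ofReal_le_ofReal_iff hTrpos.le).mp hbig
  rw [hT'def] at hle
  linarith
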